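/- Let X and Y be Banach spaces with C-finitely Fredholm equivalent Schauder decompositions witnessed by operators (L_n), (R_n), and assume the decomposition of Y is monotone and L_m R_n = Q_{min{m,n}} for all m, n. Then there is a C-equivalent norm on X, namely |||x||| = max{α⁻¹‖x‖_X, sup_n ‖L_n x‖_Y} with α = sup_n ‖R_n‖, under which the decompositions of X and Y are 1-finitely Fredholm equivalent. -/
import Mathlib


open Filter Topology

/-- If the Schauder decompositions of `X` and `Y` are `C`-finitely Fredholm
equivalent via `(L n)`, `(R n)`, the decomposition of `Y` is monotone, and
`L m ∘ R n = Q (min m n)` for all `m, n`, then the norm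
`|||x||| = max {α⁻¹ ‖x‖, sup_n ‖L n x‖}` (with `α = sup_n ‖R n‖`) is `C`-equivalent to the
norm of `X` and under it the two decompositions are `1`-finitely Fredholm equivalent
(i.e. all `L n` and `R n` have norm at most `1`). -/
theorem stmt9 (X Y : Type*) [NormedAddCommGroup X] [NormedSpace ℂ X] [CompleteSpace X]
    [NormedAddCommGroup Y] [NormedSpace ℂ Y] [CompleteSpace Y]
    (P : ℕ → X →L[ℂ] X) (Q : ℕ → Y →L[ℂ] Y)
    (hP_proj : ∀ m n, (P m).comp (P n) = P (min m n))
    (hP_lim : ∀ x : X, Tendsto (fun n => P n x) atTop (𝓝 x))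
    (hQ_proj : ∀ m n, (Q m).comp (Q n) = Q (min m n))
    (hQ_lim : ∀ y : Y, Tendsto (fun n => Q n y) atTop (𝓝 y))
    (C : ℝ) (hC : 1 ≤ C)
    (L : ℕ → X →L[ℂ] Y) (R : ℕ → Y →L[ℂ] X)
    (hLbdd : BddAbove (Set.range fun n => ‖L n‖))
    (hRbdd : BddAbove (Set.range fun n => ‖R n‖))
    (hbound : (⨆ n, ‖L n‖) * (⨆ n, ‖R n‖) ≤ C)
    (hcompat : ∀ m n, m ≤ n →
      IsCompactOperator ⇑(L m - (L n).comp (P m)) ∧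
      IsCompactOperator ⇑(L m - (Q m).comp (L n)) ∧
      IsCompactOperator ⇑(R m - (R n).comp (Q m)) ∧
      IsCompactOperator ⇑(R m - (P m).comp (R n)))
    (hfred : ∀ n, IsCompactOperator ⇑((R n).comp (L n) - P n) ∧
      IsCompactOperator ⇑((L n).comp (R n) - Q n))
    -- the decomposition of Y is monotone
    (hmono : ∀ n, ‖Q n‖ ≤ 1)
    -- L_m R_n = Q_{min{m,n}}
    (hLR : ∀ m n, (L m).comp (R n) = Q (min m n))
    (α : ℝ) (hα : α = ⨆ n, ‖R n‖) (hαpos : 0 < α)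
    (N : X → ℝ) (hN : ∀ x, N x = max (α⁻¹ * ‖x‖) (⨆ n, ‖L n x‖)) :
    ∃ c₁ c₂ : ℝ, 0 < c₁ ∧ 0 < c₂ ∧ c₁ * c₂ ≤ C ∧
      (∀ x, N x ≤ c₁ * ‖x‖) ∧ (∀ x, ‖x‖ ≤ c₂ * N x) ∧
      (∀ n x, ‖L n x‖ ≤ N x) ∧ (∀ n y, N (R n y) ≤ ‖y‖) := by

  set β := ⨆ n, ‖L n‖ with hβ
  have hβ0 : 0 ≤ β := le_ciSup_of_le hLbdd 0 (norm_nonneg _)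
  have hLle : ∀ n, ‖L n‖ ≤ β := fun n => le_ciSup hLbdd n
  have hRle : ∀ n, ‖R n‖ ≤ α := fun n => hα ▸ le_ciSup hRbdd n
  have hsupL : ∀ x : X, BddAbove (Set.range fun n => ‖L n x‖) := by
    intro x
    refine ⟨β * ‖x‖, ?_⟩
    rintro _ ⟨n, rfl⟩
    exact le_trans ((L n).le_opNorm x) (mul_le_mul_of_nonneg_right (hLle n) (norm_nonneg x))
  refine ⟨max α⁻¹ β, α, lt_max_of_lt_left (inv_pos.2 hαpos), hαpos, ?_, ?_, ?_, ?_, ?_⟩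
  · rw [max_mul_of_nonneg _ _ hαpos.le, inv_mul_cancel₀ hαpos.ne']
    exact max_le hC (hα ▸ hbound)
  · intro x
    rw [hN, max_mul_of_nonneg _ _ (norm_nonneg x)]
    refine max_le_max le_rfl (ciSup_le fun n => ?_)
    exact le_trans ((L n).le_opNorm x) (mul_le_mul_of_nonneg_right (hLle n) (norm_nonneg x))
  · intro x
    have : α⁻¹ * ‖x‖ ≤ N x := by rw [hN]; exact le_max_left _ _
    calc ‖x‖ = α * (α⁻¹ * ‖x‖) := by field_simp
    _ ≤ α * N x := mul_le_mul_of_nonneg_left this hαpos.le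
  · intro n x
    rw [hN]
    exact le_max_of_le_right (le_ciSup (hsupL x) n)
  · intro n y
    rw [hN]
    refine max_le ?_ (ciSup_le fun m => ?_)
    · calc α⁻¹ * ‖R n y‖ ≤ α⁻¹ * (α * ‖y‖) := by
            exact mul_le_mul_of_nonneg_left (le_trans ((R n).le_opNorm y)
              (mul_le_mul_of_nonneg_right (hRle n) (norm_nonneg y))) (inv_pos.2 hαpos).le
      _ = ‖y‖ := by field_simp
    · have : L m (R n y) = Q (min m n) y := by
        have := hLR m n; exact congrFun (congrArg (⇑) this) y
      rw [this]
      exact le_trans ((Q _).le_opNorm y) (by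
        simpa using mul_le_mul_of_nonneg_right (hmono (min m n)) (norm_nonneg y))
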